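/- For every game v ∈ Γ^N and every player i ∈ N, the stage-0 Shapley value for partially defined games with costs coincides with the CIS value: φ̃_{i,0}(v) = v({i}) + (v(N) − Σ_{j∈N} v({j}))/n. -/

import Mathlib

open Finset

variable {ι : Type*}

/-- The Harsanyi dividend function of a partially defined game `(v, K)`:
`d_{v,K}(∅) = 0`, and for nonempty `S`, `d_{v,K}(S) = v S - ∑_{T ⊊ S} d_{v,K}(T)`
if `S ∈ K`, and `d_{v,K}(S) = 0` otherwise. -/
noncomputable def dividend [DecidableEq ι] (K : Finset (Finset ι)) (v : Finset ι → ℝ) :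
    Finset ι → ℝ
  | S =>
    if S ∈ K ∧ S.Nonempty then
      v S - ∑ T ∈ S.ssubsets.attach, dividend K v T.1
    else 0
  termination_by S => S.card
  decreasing_by exact Finset.card_lt_card (Finset.mem_ssubsets.mp T.2)

/-- `v ∈ Γ^N`: a TU-game (`v ∅ = 0`) with nonnegative worths and `v N > 0`. -/
def GammaN [Fintype ι] (v : Finset ι → ℝ) : Prop :=
  v ∅ = 0 ∧ (∀ S : Finset ι, 0 ≤ v S) ∧ 0 < v Finset.univ

/-- `L = {{1}, …, {n}, N}`: the singletons together with the grand coalition. -/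
def coalL (ι : Type*) [Fintype ι] [DecidableEq ι] : Finset (Finset ι) :=
  (Finset.univ.image fun i : ι => ({i} : Finset ι)) ∪ {Finset.univ}

/-- `K_k = L ∪ {S_1, …, S_k}`: the known coalitions after the `k`-th examination,
for an enumeration `E` of the unknown coalitions. -/
def knownK [Fintype ι] [DecidableEq ι] (E : ℕ → Finset ι) (k : ℕ) : Finset (Finset ι) :=
  coalL ι ∪ (Finset.Icc 1 k).image E

/-- `E` (restricted to `{1, …, m}` with `m = 2^n - n - 2`) is an injective enumeration
`S_1, …, S_m` of the coalitions in `2^N ∖ (L ∪ {∅})`, i.e. the proper coalitions with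
at least two members. -/
def IsEnum [Fintype ι] [DecidableEq ι] (m : ℕ) (E : ℕ → Finset ι) : Prop :=
  m = 2 ^ Fintype.card ι - Fintype.card ι - 2 ∧
  Set.InjOn E (Set.Icc 1 m) ∧
  (∀ l ∈ Set.Icc 1 m, 2 ≤ (E l).card ∧ E l ≠ Finset.univ) ∧
  (∀ T : Finset ι, 2 ≤ T.card → T ≠ Finset.univ → ∃ l ∈ Set.Icc 1 m, E l = T)

/-- The costs satisfy `0 ≤ c_1 ≤ c_2 ≤ … ≤ c_m`. -/
def CostsOk (m : ℕ) (c : ℕ → ℝ) : Prop :=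
  (∀ l ∈ Set.Icc 1 m, 0 ≤ c l) ∧ ∀ l, 1 ≤ l → l + 1 ≤ m → c l ≤ c (l + 1)

/-- The Shapley value for partially defined games with costs:
`φ̃_{i,k}(v) = ∑_{S ⊊ N, i ∈ S} d_{v,K_k}(S)/|S| + (d_{v,K_k}(N) - ∑_{l=1}^k c_l)/n`. -/
noncomputable def phiTilde [Fintype ι] [DecidableEq ι] (E : ℕ → Finset ι) (c : ℕ → ℝ)
    (v : Finset ι → ℝ) (i : ι) (k : ℕ) : ℝ :=
  (∑ S ∈ Finset.univ.filter (fun S : Finset ι => S ⊂ Finset.univ ∧ i ∈ S),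
      dividend (knownK E k) v S / S.card) +
    (dividend (knownK E k) v Finset.univ - ∑ l ∈ Finset.Icc 1 k, c l) / (Fintype.card ι)


lemma dividend_spec [DecidableEq ι] (K : Finset (Finset ι)) (v : Finset ι → ℝ) (S : Finset ι) :
    dividend K v S =
      if S ∈ K ∧ S.Nonempty then v S - ∑ T ∈ S.ssubsets, dividend K v T else 0 := by
  rw [dividend, ← Finset.sum_attach S.ssubsets (fun T => dividend K v T)]

lemma dividend_empty [DecidableEq ι] (K : Finset (Finset ι)) (v : Finset ι → ℝ) :
    dividend K v ∅ = 0 := by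
  rw [dividend_spec]; simp

lemma dividend_not_mem [DecidableEq ι] {K : Finset (Finset ι)} (v : Finset ι → ℝ)
    {S : Finset ι} (h : S ∉ K) : dividend K v S = 0 := by
  rw [dividend_spec]; simp [h]

lemma dividend_singleton [DecidableEq ι] {K : Finset (Finset ι)} (v : Finset ι → ℝ)
    {j : ι} (h : ({j} : Finset ι) ∈ K) : dividend K v {j} = v {j} := by
  rw [dividend_spec]
  have : ({j} : Finset ι).ssubsets = {∅} := by
    ext T
    simp only [Finset.mem_ssubsets, Finset.mem_singleton, Finset.ssubset_singleton_iff]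
  simp [h, this, dividend_empty]

lemma mem_coalL [Fintype ι] [DecidableEq ι] {S : Finset ι} :
    S ∈ coalL ι ↔ (∃ j, S = {j}) ∨ S = Finset.univ := by
  simp [coalL, eq_comm]
  exact Or.comm

lemma knownK_zero [Fintype ι] [DecidableEq ι] (E : ℕ → Finset ι) :
    knownK E 0 = coalL ι := by
  simp [knownK]

lemma dividend_coalL_univ [Fintype ι] [DecidableEq ι] (hn : 2 ≤ Fintype.card ι)
    (v : Finset ι → ℝ) :
    dividend (coalL ι) v Finset.univ = v Finset.univ - ∑ j : ι, v {j} := by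
  rw [dividend_spec]
  have hmem : (Finset.univ : Finset ι) ∈ coalL ι := mem_coalL.mpr (Or.inr rfl)
  have hne : (Finset.univ : Finset ι).Nonempty := by
    have h0 : 0 < Fintype.card ι := by omega
    exact Finset.card_pos.mp (by rwa [Finset.card_univ])
  rw [if_pos ⟨hmem, hne⟩]
  have hsum : ∑ T ∈ (Finset.univ : Finset ι).ssubsets, dividend (coalL ι) v T
      = ∑ j : ι, v {j} := by
    have hsub : (Finset.univ.image fun j : ι => ({j} : Finset ι)) ⊆
        (Finset.univ : Finset ι).ssubsets := by
      intro T hT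
      simp only [Finset.mem_image, Finset.mem_univ, true_and] at hT
      obtain ⟨j, rfl⟩ := hT
      rw [Finset.mem_ssubsets, Finset.ssubset_univ_iff]
      intro h
      have := Finset.card_univ (α := ι)
      rw [← h, Finset.card_singleton] at this
      omega
    rw [← Finset.sum_subset hsub, Finset.sum_image]
    · refine Finset.sum_congr rfl fun j _ => ?_
      exact dividend_singleton v (mem_coalL.mpr (Or.inl ⟨j, rfl⟩))
    · intro a _ b _ h
      exact Finset.singleton_injective h
    · intro T hT hT2
      rcases Finset.eq_empty_or_nonempty T with rfl | hTne
      · exact dividend_empty _ _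
      refine dividend_not_mem v fun hmem => ?_
      rcases mem_coalL.mp hmem with ⟨j, rfl⟩ | rfl
      · exact hT2 (by simp)
      · exact absurd (Finset.mem_ssubsets.mp hT) ((fun h => (Finset.ssubset_iff_subset_ne.mp h).2 rfl : ¬ (Finset.univ : Finset ι) ⊂ Finset.univ))
  rw [hsum]

/-- For every game `v ∈ Γ^N` and every player `i ∈ N`, the stage-0
Shapley value for partially defined games with costs coincides with the CIS value:
`φ̃_{i,0}(v) = v({i}) + (v(N) - ∑_{j ∈ N} v({j}))/n`. -/
theorem phiTilde_stage_zero_eq_CIS [Fintype ι] [DecidableEq ι]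
    (hn : 2 ≤ Fintype.card ι)
    (m : ℕ) (E : ℕ → Finset ι) (hE : IsEnum m E)
    (c : ℕ → ℝ) (hc : CostsOk m c)
    (v : Finset ι → ℝ) (hv : GammaN v) (i : ι) :
    phiTilde E c v i 0 =
      v {i} + (v Finset.univ - ∑ j : ι, v {j}) / (Fintype.card ι) := by
  classical
  have hi : i ∈ Finset.univ := Finset.mem_univ i
  rw [phiTilde, knownK_zero]
  have hfilter : Finset.univ.filter (fun S : Finset ι => S ⊂ Finset.univ ∧ i ∈ S) =
      Finset.univ.filter (fun S : Finset ι => S ⊂ Finset.univ ∧ i ∈ S) := rfl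
  have hsum1 : (∑ S ∈ Finset.univ.filter (fun S : Finset ι => S ⊂ Finset.univ ∧ i ∈ S),
      dividend (coalL ι) v S / S.card) = v {i} := by
    have hmemi : ({i} : Finset ι) ∈
        Finset.univ.filter (fun S : Finset ι => S ⊂ Finset.univ ∧ i ∈ S) := by
      rw [Finset.mem_filter]
      refine ⟨Finset.mem_univ _, ?_, Finset.mem_singleton_self i⟩
      rw [Finset.ssubset_univ_iff]
      intro h
      have := Finset.card_univ (α := ι)
      rw [← h, Finset.card_singleton] at this
      omega
    rw [← Finset.sum_subset (Finset.singleton_subset_iff.mpr hmemi)]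
    · rw [Finset.sum_singleton, dividend_singleton v (mem_coalL.mpr (Or.inl ⟨i, rfl⟩))]
      simp
    · intro S hS hS2
      simp only [Finset.mem_filter, Finset.mem_univ, true_and] at hS
      simp only [Finset.mem_singleton] at hS2
      have hS0 : dividend (coalL ι) v S = 0 := by
        refine dividend_not_mem v fun hmem => ?_
        rcases mem_coalL.mp hmem with ⟨j, rfl⟩ | rfl
        · rw [Finset.mem_singleton] at hS; exact hS2 (by rw [hS.2])
        · exact absurd hS.1 ((fun h => (Finset.ssubset_iff_subset_ne.mp h).2 rfl : ¬ (Finset.univ : Finset ι) ⊂ Finset.univ))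
      rw [hS0, zero_div]
  rw [hsum1, dividend_coalL_univ hn v]
  simp
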